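/- Let n, m, d be positive integers with m ≤ n, and set k = nd and r = md. Then the number of k-equivalence classes of 𝒜_n(r,k) is |𝒫_n(r,k)| = |𝒜_n(r,k)|/n = (1/n) · Σ_{s | gcd(n,m)} C(n/s, m/s) · μ(s), where the sum is over all positive divisors s of gcd(n,m). -/

import Mathlib

open Finset

/-- The set of residues of `A` modulo `k`. -/
def resSet (k : ℕ) (A : Finset ℕ) : Finset ℕ := A.image (· % k)

/-- The set `A + t = {a + t : a ∈ A}`. -/
def shiftSet (A : Finset ℕ) (t : ℕ) : Finset ℕ := A.image (· + t)

/-- Two finite sets of naturals are equal modulo `k` if they have the same residues mod `k`. -/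
def eqMod (k : ℕ) (A B : Finset ℕ) : Prop := resSet k A = resSet k B

/-- `fk k A` is the least positive `l` with `A + l` equal to `A` modulo `k`. -/
noncomputable def fk (k : ℕ) (A : Finset ℕ) : ℕ :=
  sInf {l : ℕ | 0 < l ∧ eqMod k (shiftSet A l) A}

/-- `𝒜(j, i)`: the collection of all `j`-element subsets of `{0, 1, ..., i-1}`. -/
def Acoll (j i : ℕ) : Finset (Finset ℕ) :=
  (Finset.range i).powerset.filter (fun A => A.card = j)

open scoped Classical in
/-- `𝒜_s(j, i)`: the members `A` of `𝒜(j, i)` with `f_i(A) = s`. -/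
noncomputable def Asub (s j i : ℕ) : Finset (Finset ℕ) :=
  (Acoll j i).filter (fun A => fk i A = s)

/-- The orbit of `A` under shifting modulo `k`: the residue sets of `A + j`, `0 ≤ j < k`.
Two subsets of `{0, ..., k-1}` are `k`-equivalent iff their orbits coincide. -/
def orb (k : ℕ) (A : Finset ℕ) : Finset (Finset ℕ) :=
  (Finset.range k).image (fun j => resSet k (shiftSet A j))

/-- `|𝒫_n(r, k)|`: the number of `k`-equivalence classes of `𝒜_n(r, k)`. -/
noncomputable def numClasses (n r k : ℕ) : ℕ := ((Asub n r k).image (orb k)).card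

namespace Aux

/-- shift by `t` modulo `k`. -/
def S (k t : ℕ) (A : Finset ℕ) : Finset ℕ := A.image (fun a => (a + t) % k)

lemma resSet_shift (k t : ℕ) (A : Finset ℕ) : resSet k (shiftSet A t) = S k t A := by
  unfold resSet shiftSet S
  rw [Finset.image_image]
  rfl

lemma resSet_eq_self {k : ℕ} {A : Finset ℕ} (h : A ⊆ range k) : resSet k A = A := by
  unfold resSet
  rw [Finset.image_congr (g := id), Finset.image_id]
  intro a ha
  exact Nat.mod_eq_of_lt (mem_range.mp (h ha))

lemma S_subset {k : ℕ} (hk : 0 < k) (t : ℕ) (A : Finset ℕ) : S k t A ⊆ range k := by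
  intro x hx
  simp only [S, mem_image] at hx
  obtain ⟨a, _, rfl⟩ := hx
  exact mem_range.mpr (Nat.mod_lt _ hk)

lemma S_card {k : ℕ} {A : Finset ℕ} (h : A ⊆ range k) (t : ℕ) :
    (S k t A).card = A.card := by
  apply Finset.card_image_of_injOn
  intro a ha b hb hab
  have ha' := mem_range.mp (h ha)
  have hb' := mem_range.mp (h hb)
  have : a % k = b % k := Nat.ModEq.add_right_cancel' t hab
  rwa [Nat.mod_eq_of_lt ha', Nat.mod_eq_of_lt hb'] at this

lemma S_S (k t u : ℕ) (A : Finset ℕ) : S k t (S k u A) = S k (u + t) A := by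
  unfold S
  rw [Finset.image_image]
  apply Finset.image_congr
  intro a _
  simp only [Function.comp_apply]
  rw [Nat.mod_add_mod, add_assoc]

lemma S_zero {k : ℕ} {A : Finset ℕ} (h : A ⊆ range k) : S k 0 A = A := by
  unfold S
  simpa [resSet] using resSet_eq_self h

lemma S_mod (k t : ℕ) (A : Finset ℕ) : S k (t % k) A = S k t A := by
  unfold S
  apply Finset.image_congr
  intro a _
  show (a + t % k) % k = (a + t) % k
  conv_lhs => rw [Nat.add_mod, Nat.mod_mod_of_dvd _ (dvd_refl k)]
  rw [← Nat.add_mod]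

lemma S_k {k : ℕ} {A : Finset ℕ} (hk : 0 < k) (h : A ⊆ range k) : S k k A = A := by
  have := S_mod k k A
  rw [Nat.mod_self] at this
  rw [← this, S_zero h]

lemma exists_inv (k t : ℕ) (hk : 0 < k) : ∃ t', (t + t') % k = 0 := by
  refine ⟨(k - t % k) % k, ?_⟩
  have h1 : t % k < k := Nat.mod_lt _ hk
  rw [Nat.add_mod, Nat.mod_mod_of_dvd _ (dvd_refl k)]
  rcases Nat.eq_zero_or_pos (t % k) with h | h
  · simp [h]
  · have h2 : (k - t % k) % k = k - t % k := Nat.mod_eq_of_lt (by omega)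
    rw [h2]
    have h3 : t % k + (k - t % k) = k := by omega
    rw [h3, Nat.mod_self]

lemma S_inj {k : ℕ} (hk : 0 < k) {A B : Finset ℕ} (hA : A ⊆ range k) (hB : B ⊆ range k)
    (t : ℕ) (h : S k t A = S k t B) : A = B := by
  obtain ⟨t', ht'⟩ := exists_inv k t hk
  have hA' : S k t' (S k t A) = A := by
    rw [S_S, ← S_mod, ht', S_zero hA]
  have hB' : S k t' (S k t B) = B := by
    rw [S_S, ← S_mod, ht', S_zero hB]
  rw [← hA', ← hB', h]


variable {k : ℕ} {A : Finset ℕ}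

lemma fk_eq_sInf (h : A ⊆ range k) :
    fk k A = sInf {l : ℕ | 0 < l ∧ S k l A = A} := by
  unfold fk
  congr 1
  ext l
  simp only [Set.mem_setOf_eq, eqMod, resSet_shift, resSet_eq_self h]

lemma periodSet_nonempty (hk : 0 < k) (h : A ⊆ range k) :
    k ∈ {l : ℕ | 0 < l ∧ S k l A = A} := ⟨hk, S_k hk h⟩

lemma fk_spec (hk : 0 < k) (h : A ⊆ range k) :
    0 < fk k A ∧ S k (fk k A) A = A := by
  rw [fk_eq_sInf h]
  exact Nat.sInf_mem ⟨k, periodSet_nonempty hk h⟩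

lemma S_mul {l : ℕ} (h : A ⊆ range k) (hl : S k l A = A) (j : ℕ) : S k (j * l) A = A := by
  induction j with
  | zero => simpa using S_zero h
  | succ j ih =>
    have hh : (j + 1) * l = j * l + l := by ring
    rw [hh, ← S_S, ih, hl]

lemma fk_dvd_iff (hk : 0 < k) (h : A ⊆ range k) (l : ℕ) :
    S k l A = A ↔ fk k A ∣ l := by
  constructor
  · intro hl
    by_contra hdvd
    have hrpos : 0 < l % fk k A := by
      rcases Nat.eq_zero_or_pos (l % fk k A) with h0 | h0
      · exact absurd (Nat.dvd_of_mod_eq_zero h0) hdvd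
      · exact h0
    have hlt : l % fk k A < fk k A := Nat.mod_lt _ (fk_spec hk h).1
    have hS : S k (l % fk k A) A = A := by
      have hdecomp : l = fk k A * (l / fk k A) + l % fk k A := (Nat.div_add_mod l _).symm
      have h1 : S k (l / fk k A * fk k A) A = A := S_mul h (fk_spec hk h).2 _
      have h2 : S k (l % fk k A) (S k (l / fk k A * fk k A) A)
          = S k (l / fk k A * fk k A + l % fk k A) A := S_S _ _ _ _
      rw [h1] at h2
      rw [h2]
      have h3 : l / fk k A * fk k A + l % fk k A = l := Nat.div_add_mod' l _
      rw [h3, hl]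
    have : l % fk k A ∉ {l : ℕ | 0 < l ∧ S k l A = A} :=
      Nat.notMem_of_lt_sInf (by rw [← fk_eq_sInf h]; exact hlt)
    exact this ⟨hrpos, hS⟩
  · rintro ⟨c, rfl⟩
    rw [mul_comm]
    exact S_mul h (fk_spec hk h).2 c

lemma fk_dvd_k (hk : 0 < k) (h : A ⊆ range k) : fk k A ∣ k :=
  (fk_dvd_iff hk h k).mp (S_k hk h)

lemma fk_S (hk : 0 < k) (h : A ⊆ range k) (t : ℕ) : fk k (S k t A) = fk k A := by
  rw [fk_eq_sInf h, fk_eq_sInf (S_subset hk t A)]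
  congr 1
  ext l
  simp only [Set.mem_setOf_eq, and_congr_right_iff]
  intro _
  constructor
  · intro hl
    apply S_inj hk (S_subset hk l A) h t
    rw [S_S, add_comm, ← S_S]
    exact hl
  · intro hl
    rw [S_S, add_comm, ← S_S, hl]


lemma orb_eq (k : ℕ) (A : Finset ℕ) :
    orb k A = (range k).image (fun j => S k j A) := by
  unfold orb
  apply Finset.image_congr
  intro j _
  exact resSet_shift k j A

lemma mem_orb (hk : 0 < k) {B : Finset ℕ} :
    B ∈ orb k A ↔ ∃ j, B = S k j A := by
  rw [orb_eq]
  simp only [mem_image, mem_range]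
  constructor
  · rintro ⟨j, _, rfl⟩; exact ⟨j, rfl⟩
  · rintro ⟨j, rfl⟩
    exact ⟨j % k, Nat.mod_lt _ hk, S_mod k j A⟩

lemma self_mem_orb (hk : 0 < k) (h : A ⊆ range k) : A ∈ orb k A :=
  (mem_orb hk).mpr ⟨0, (S_zero h).symm⟩

lemma orb_shift (hk : 0 < k) (h : A ⊆ range k) (t : ℕ) : orb k (S k t A) = orb k A := by
  apply Finset.Subset.antisymm
  · intro B hB
    obtain ⟨j, rfl⟩ := (mem_orb hk).mp hB
    exact (mem_orb hk).mpr ⟨t + j, by rw [S_S]⟩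
  · intro B hB
    obtain ⟨j, rfl⟩ := (mem_orb hk).mp hB
    obtain ⟨t', ht'⟩ := exists_inv k t hk
    refine (mem_orb hk).mpr ⟨t' + j, ?_⟩
    have e1 : S k (t + t') A = A := by rw [← S_mod, ht', S_zero h]
    rw [S_S, ← add_assoc, ← S_S, e1]

lemma card_orb (hk : 0 < k) (h : A ⊆ range k) : (orb k A).card = fk k A := by
  set p := fk k A with hp
  have hp0 : 0 < p := (fk_spec hk h).1
  have hpk : p ∣ k := fk_dvd_k hk h
  have hple : p ≤ k := Nat.le_of_dvd hk hpk
  have himg : orb k A = (range p).image (fun j => S k j A) := by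
    rw [orb_eq]
    apply Finset.Subset.antisymm
    · intro B hB
      obtain ⟨j, _, rfl⟩ := mem_image.mp hB
      refine mem_image.mpr ⟨j % p, mem_range.mpr (Nat.mod_lt _ hp0), ?_⟩
      have : S k (p * (j / p)) A = A := by
        rw [mul_comm]; exact S_mul h (fk_spec hk h).2 _
      calc S k (j % p) A = S k (j % p) (S k (p * (j / p)) A) := by rw [this]
        _ = S k (p * (j / p) + j % p) A := S_S _ _ _ _
        _ = S k j A := by rw [Nat.div_add_mod]
    · exact Finset.image_subset_image (fun x hx => mem_range.mpr (lt_of_lt_of_le (mem_range.mp hx) hple))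
  rw [himg]
  rw [Finset.card_image_of_injOn, Finset.card_range]
  intro j hj j' hj' hjj0
  have hjj : S k j A = S k j' A := hjj0
  simp only [Finset.coe_range, Set.mem_Iio] at hj hj'
  rcases le_total j j' with hle | hle
  · have h1 : S k j (S k (j' - j) A) = S k j A := by
      rw [S_S, show j' - j + j = j' by omega, hjj]
    have h2 : S k (j' - j) A = A := S_inj hk (S_subset hk _ A) h j h1
    have := (fk_dvd_iff hk h _).mp h2
    rw [← hp] at this
    have := Nat.eq_zero_of_dvd_of_lt this
    omega
  · have h1 : S k j' (S k (j - j') A) = S k j' A := by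
      rw [S_S, show j - j' + j' = j by omega, ← hjj]
    have h2 : S k (j - j') A = A := S_inj hk (S_subset hk _ A) h j' h1
    have := (fk_dvd_iff hk h _).mp h2
    rw [← hp] at this
    have := Nat.eq_zero_of_dvd_of_lt this
    omega

lemma mem_Acoll {r : ℕ} : A ∈ Acoll r k ↔ A ⊆ range k ∧ A.card = r := by
  simp [Acoll, Finset.mem_filter, Finset.mem_powerset]

lemma mem_Asub {n r : ℕ} : A ∈ Asub n r k ↔ (A ⊆ range k ∧ A.card = r) ∧ fk k A = n := by
  simp [Asub, Finset.mem_filter, mem_Acoll]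

lemma orb_subset_Asub (hk : 0 < k) {n r : ℕ} (hA : A ∈ Asub n r k) :
    orb k A ⊆ Asub n r k := by
  intro B hB
  have h := (mem_Asub.mp hA)
  obtain ⟨j, rfl⟩ := (mem_orb hk).mp hB
  exact mem_Asub.mpr ⟨⟨S_subset hk j A, by rw [S_card h.1.1, h.1.2]⟩,
    by rw [fk_S hk h.1.1, h.2]⟩

lemma part1 (n r k : ℕ) (hk : 0 < k) :
    numClasses n r k * n = (Asub n r k).card := by
  unfold numClasses
  rw [Finset.card_eq_sum_card_image (orb k) (Asub n r k)]
  rw [Finset.sum_congr rfl (g := fun _ => n), Finset.sum_const, smul_eq_mul]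
  intro b hb
  obtain ⟨A, hA, rfl⟩ := mem_image.mp hb
  have hrange : A ⊆ range k := (mem_Asub.mp hA).1.1
  have hfilter : (Asub n r k).filter (fun B => orb k B = orb k A) = orb k A := by
    ext B
    simp only [Finset.mem_filter]
    constructor
    · rintro ⟨hB, horb⟩
      rw [← horb]
      exact self_mem_orb hk (mem_Asub.mp hB).1.1
    · intro hB
      refine ⟨orb_subset_Asub hk hA hB, ?_⟩
      obtain ⟨j, rfl⟩ := (mem_orb hk).mp hB
      exact orb_shift hk hrange j
  rw [hfilter, card_orb hk hrange, (mem_Asub.mp hA).2]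


/-- Expansion of a subset of `range t` to an invariant subset of `range k`. -/
def Phi (k t : ℕ) (B : Finset ℕ) : Finset ℕ := (range k).filter (fun a => a % t ∈ B)

lemma step_mem (h : A ⊆ range k) {t : ℕ} (hS : S k t A = A) (x : ℕ) :
    x % k ∈ A ↔ (x + t) % k ∈ A := by
  constructor
  · intro hx
    have : (x % k + t) % k ∈ S k t A := mem_image_of_mem _ hx
    rwa [hS, Nat.mod_add_mod] at this
  · intro hx
    rw [← hS] at hx
    obtain ⟨a, ha, hax⟩ := mem_image.mp hx
    have hak : a < k := mem_range.mp (h ha)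
    have : a % k = x % k := Nat.ModEq.add_right_cancel' t hax
    rw [Nat.mod_eq_of_lt hak] at this
    rwa [← this]

lemma iterate_mem (h : A ⊆ range k) {t : ℕ} (hS : S k t A = A) (j x : ℕ) :
    x % k ∈ A ↔ (x + j * t) % k ∈ A := by
  induction j with
  | zero => simp
  | succ j ih =>
    rw [ih, show x + (j + 1) * t = (x + j * t) + t by ring]
    exact step_mem h hS _

lemma mem_iff_mod (hk : 0 < k) (h : A ⊆ range k) {t : ℕ} (ht : 0 < t) (htk : t ∣ k)
    (hS : S k t A = A) {a : ℕ} (ha : a < k) : a ∈ A ↔ a % t ∈ A := by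
  have htle : t ≤ k := Nat.le_of_dvd hk htk
  have h1 : a % t < k := lt_of_lt_of_le (Nat.mod_lt _ ht) htle
  have := iterate_mem h hS (a / t) (a % t)
  rw [Nat.mod_eq_of_lt h1, Nat.mod_add_div', Nat.mod_eq_of_lt ha] at this
  exact this.symm

lemma Phi_subset (k t : ℕ) (B : Finset ℕ) : Phi k t B ⊆ range k :=
  Finset.filter_subset _ _

lemma Phi_card {t e : ℕ} (ht : 0 < t) {B : Finset ℕ} (hB : B ⊆ range t) :
    (Phi (t * e) t B).card = B.card * e := by
  have : (Phi (t * e) t B).card = (B ×ˢ range e).card := by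
    apply Finset.card_bij' (fun a _ => (a % t, a / t)) (fun p _ => p.1 + p.2 * t)
    · intro a ha
      simp only [Phi, mem_filter, mem_range] at ha
      refine Finset.mem_product.mpr ⟨ha.2, mem_range.mpr ?_⟩
      exact Nat.div_lt_of_lt_mul (by rw [mul_comm] at ha ⊢; exact ha.1)
    · intro p hp
      obtain ⟨hp1, hp2⟩ := Finset.mem_product.mp hp
      have hb : p.1 < t := mem_range.mp (hB hp1)
      have hi : p.2 < e := mem_range.mp hp2
      simp only [Phi, mem_filter, mem_range]
      constructor
      · calc p.1 + p.2 * t < t + p.2 * t := by omega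
          _ = (p.2 + 1) * t := by ring
          _ ≤ e * t := Nat.mul_le_mul_right t (by omega)
          _ = t * e := mul_comm _ _
      · rw [Nat.add_mul_mod_self_right, Nat.mod_eq_of_lt hb]
        exact hp1
    · intro a ha
      exact Nat.mod_add_div' a t
    · intro p hp
      obtain ⟨hp1, hp2⟩ := Finset.mem_product.mp hp
      have hb : p.1 < t := mem_range.mp (hB hp1)
      have : (p.1 + p.2 * t) % t = p.1 := by
        rw [Nat.add_mul_mod_self_right, Nat.mod_eq_of_lt hb]
      have hdiv : (p.1 + p.2 * t) / t = p.2 := by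
        rw [Nat.add_mul_div_right _ _ ht, Nat.div_eq_of_lt hb, Nat.zero_add]
      rw [this, hdiv]
  rw [this, Finset.card_product, Finset.card_range]

lemma Phi_invariant {t e : ℕ} (ht : 0 < t) (he : 0 < e) (B : Finset ℕ) :
    S (t * e) t (Phi (t * e) t B) = Phi (t * e) t B := by
  have hk : 0 < t * e := Nat.mul_pos ht he
  apply Finset.eq_of_subset_of_card_le
  · intro x hx
    obtain ⟨a, ha, rfl⟩ := mem_image.mp hx
    simp only [Phi, mem_filter, mem_range] at ha ⊢
    refine ⟨Nat.mod_lt _ hk, ?_⟩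
    rw [Nat.mod_mod_of_dvd _ (Dvd.intro e rfl), Nat.add_mod_right]
    exact ha.2
  · exact le_of_eq (S_card (Phi_subset _ _ _) t).symm

lemma invariant_eq_Phi {t e : ℕ} (ht : 0 < t) (he : 0 < e)
    (h : A ⊆ range (t * e)) (hS : S (t * e) t A = A) :
    A = Phi (t * e) t (A.filter (· < t)) := by
  have hk : 0 < t * e := Nat.mul_pos ht he
  ext a
  simp only [Phi, mem_filter, mem_range]
  constructor
  · intro ha
    have hak : a < t * e := mem_range.mp (h ha)
    refine ⟨hak, ?_, Nat.mod_lt _ ht⟩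
    exact (mem_iff_mod hk h ht (Dvd.intro e rfl) hS hak).mp ha
  · rintro ⟨hak, hmem, -⟩
    exact (mem_iff_mod hk h ht (Dvd.intro e rfl) hS hak).mpr hmem

lemma filter_Phi {t e : ℕ} (he : 0 < e) {B : Finset ℕ} (hB : B ⊆ range t) :
    (Phi (t * e) t B).filter (· < t) = B := by
  ext b
  simp only [Phi, mem_filter, mem_range]
  constructor
  · rintro ⟨⟨-, hmod⟩, hbt⟩
    rwa [Nat.mod_eq_of_lt hbt] at hmod
  · intro hb
    have hbt : b < t := mem_range.mp (hB hb)
    have : b < t * e := lt_of_lt_of_le hbt (Nat.le_mul_of_pos_right t he)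
    exact ⟨⟨this, by rwa [Nat.mod_eq_of_lt hbt]⟩, hbt⟩

lemma card_invariant_eq (t e c : ℕ) (ht : 0 < t) (he : 0 < e) :
    ((Acoll (c * e) (t * e)).filter (fun A => S (t * e) t A = A)).card = t.choose c := by
  have hAc : (Acoll c t).card = t.choose c := by
    have : Acoll c t = Finset.powersetCard c (range t) := by
      rw [Finset.powersetCard_eq_filter]; rfl
    rw [this, Finset.card_powersetCard, Finset.card_range]
  rw [← hAc]
  apply Finset.card_bij' (fun A _ => A.filter (· < t)) (fun B _ => Phi (t * e) t B)
  · intro A hA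
    simp only [mem_filter] at hA
    obtain ⟨hA1, hS⟩ := hA
    obtain ⟨hsub, hcard⟩ := mem_Acoll.mp hA1
    have heq := invariant_eq_Phi ht he hsub hS
    have hsub2 : A.filter (· < t) ⊆ range t := fun x hx =>
      mem_range.mpr (mem_filter.mp hx).2
    have hcard2 : (A.filter (· < t)).card * e = c * e := by
      rw [← Phi_card ht hsub2, ← heq, hcard]
    exact mem_Acoll.mpr ⟨hsub2, Nat.eq_of_mul_eq_mul_right he hcard2⟩
  · intro B hB
    obtain ⟨hsub, hcard⟩ := mem_Acoll.mp hB
    refine mem_filter.mpr ⟨mem_Acoll.mpr ⟨Phi_subset _ _ _, ?_⟩, Phi_invariant ht he B⟩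
    rw [Phi_card ht hsub, hcard]
  · intro A hA
    simp only [mem_filter] at hA
    obtain ⟨hA1, hS⟩ := hA
    obtain ⟨hsub, hcard⟩ := mem_Acoll.mp hA1
    exact (invariant_eq_Phi ht he hsub hS).symm
  · intro B hB
    exact filter_Phi he (mem_Acoll.mp hB).1

lemma card_invariant_zero (t e r : ℕ) (ht : 0 < t) (he : 0 < e) (hr : ¬ e ∣ r) :
    ((Acoll r (t * e)).filter (fun A => S (t * e) t A = A)).card = 0 := by
  rw [Finset.card_eq_zero, Finset.eq_empty_iff_forall_notMem]
  intro A hA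
  simp only [mem_filter] at hA
  obtain ⟨hA1, hS⟩ := hA
  obtain ⟨hsub, hcard⟩ := mem_Acoll.mp hA1
  have heq := invariant_eq_Phi ht he hsub hS
  have hsub2 : A.filter (· < t) ⊆ range t := fun x hx =>
    mem_range.mpr (mem_filter.mp hx).2
  have : A.card = (A.filter (· < t)).card * e := by
    rw [← Phi_card ht hsub2, ← heq]
  exact hr ⟨(A.filter (· < t)).card, by rw [← hcard, this, mul_comm]⟩


open scoped Classical in
lemma g_eq (r k t : ℕ) (hk : 0 < k) (ht : 0 < t) :
    ((Acoll r k).filter (fun A => S k t A = A)).card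
      = ∑ u ∈ t.divisors, (Asub u r k).card := by
  have h1 : (Acoll r k).filter (fun A => S k t A = A)
      = (Acoll r k).filter (fun A => fk k A ∣ t) := by
    apply Finset.filter_congr
    intro A hA
    have hsub : A ⊆ range k := (mem_Acoll.mp hA).1
    simpa using fk_dvd_iff hk hsub t
  rw [h1]
  rw [Finset.card_eq_sum_card_fiberwise (f := fk k) (t := t.divisors) ?hmem]
  case hmem =>
    intro A hA
    simp only [Finset.mem_coe, mem_filter] at hA
    have hsub : A ⊆ range k := (mem_Acoll.mp hA.1).1
    exact Nat.mem_divisors.mpr ⟨hA.2, by omega⟩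
  apply Finset.sum_congr rfl
  intro u hu
  congr 1
  ext A
  simp only [Asub, mem_filter]
  constructor
  · rintro ⟨⟨hA, -⟩, hfk⟩
    exact ⟨hA, hfk⟩
  · rintro ⟨hA, hfk⟩
    exact ⟨⟨hA, hfk ▸ (Nat.mem_divisors.mp hu).1⟩, hfk⟩

open ArithmeticFunction in
lemma moebius_inv (r k n : ℕ) (hk : 0 < k) (hn : 0 < n) :
    ((Asub n r k).card : ℤ) = ∑ s ∈ n.divisors,
      (moebius s : ℤ) * (((Acoll r k).filter (fun A => S k (n / s) A = A)).card : ℤ) := by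
  classical
  have key := (sum_eq_iff_sum_smul_moebius_eq
    (f := fun u => ((Asub u r k).card : ℤ))
    (g := fun t => (((Acoll r k).filter (fun A => S k t A = A)).card : ℤ))).mp ?hfg n hn
  · rw [← key, Nat.sum_divisorsAntidiagonal
      (f := fun s t => (moebius s : ℤ) • (((Acoll r k).filter (fun A => S k t A = A)).card : ℤ))]
    simp [zsmul_eq_mul]
  case hfg =>
    intro t ht
    exact_mod_cast (g_eq r k t hk ht).symm

end Aux

open Aux ArithmeticFunction

/-- for `k = n * d`, `r = m * d`, the number of `k`-equivalence classes of
`𝒜_n(r, k)` satisfies `|𝒫_n(r, k)| · n = |𝒜_n(r, k)| = ∑_{s ∣ gcd(n, m)} C(n/s, m/s) μ(s)`. -/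
theorem card_classes (n m d : ℕ) (hn : 0 < n) (hm : 0 < m) (hd : 0 < d) (hmn : m ≤ n) :
    numClasses n (m * d) (n * d) * n = (Asub n (m * d) (n * d)).card ∧
    ((numClasses n (m * d) (n * d) * n : ℕ) : ℤ) =
      ∑ s ∈ (Nat.gcd n m).divisors,
        ((n / s).choose (m / s) : ℤ) * ArithmeticFunction.moebius s := by
  have hk : 0 < n * d := Nat.mul_pos hn hd
  have hpart1 := part1 n (m * d) (n * d) hk
  refine ⟨hpart1, ?_⟩
  rw [hpart1]
  rw [moebius_inv (m * d) (n * d) n hk hn]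
  have hterm : ∀ s ∈ n.divisors,
      (moebius s : ℤ) * (((Acoll (m * d) (n * d)).filter
        (fun A => S (n * d) (n / s) A = A)).card : ℤ)
      = if s ∣ m then ((n / s).choose (m / s) : ℤ) * moebius s else 0 := by
    intro s hs
    obtain ⟨hsn, hn0⟩ := Nat.mem_divisors.mp hs
    have hs0 : 0 < s := Nat.pos_of_dvd_of_pos hsn hn
    have ht0 : 0 < n / s := Nat.div_pos (Nat.le_of_dvd hn hsn) hs0
    have he0 : 0 < s * d := Nat.mul_pos hs0 hd
    have hkeq : n * d = (n / s) * (s * d) := by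
      rw [← mul_assoc, Nat.div_mul_cancel hsn]
    by_cases hsm : s ∣ m
    · have hreq : m * d = (m / s) * (s * d) := by
        rw [← mul_assoc, Nat.div_mul_cancel hsm]
      rw [if_pos hsm]
      have := card_invariant_eq (n / s) (s * d) (m / s) ht0 he0
      rw [hkeq, hreq, this]
      ring
    · rw [if_neg hsm]
      have hnd : ¬ (s * d) ∣ (m * d) := by
        intro hcon
        exact hsm ((Nat.mul_dvd_mul_iff_right hd).mp hcon)
      have := card_invariant_zero (n / s) (s * d) (m * d) ht0 he0 hnd
      rw [hkeq, this]
      ring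
  rw [Finset.sum_congr rfl hterm]
  rw [Finset.sum_ite, Finset.sum_const_zero, add_zero]
  apply Finset.sum_congr ?hset (fun _ _ => rfl)
  case hset =>
    ext s
    simp only [Finset.mem_filter, Nat.mem_divisors, Nat.dvd_gcd_iff]
    constructor
    · rintro ⟨⟨h1, h2⟩, h3⟩
      exact ⟨⟨h1, h3⟩, (Nat.gcd_pos_of_pos_left m hn).ne'⟩
    · rintro ⟨⟨h1, h3⟩, -⟩
      exact ⟨⟨h1, by omega⟩, h3⟩
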